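/- Soundness of the extensions of DmbC with respect to swap Kripke models: for each logic L ∈ {DmbCciw, DmbCci, DbC, DCi} and every set of formulas Γ ∪ {φ} ⊆ For(Σ), if Γ ⊢_L φ then Γ ⊨_L φ. -/
import Mathlib


/-- Formulas over the signature Σ = {∧, ∨, →, ¬, ∘, O}, with countably many
propositional variables. -/
inductive Form : Type
  | var : ℕ → Form
  | and : Form → Form → Form
  | or : Form → Form → Form
  | imp : Form → Form → Form
  | neg : Form → Form
  | circ : Form → Form
  | obl : Form → Form

namespace Form
/-- ⊥_α := (α ∧ ¬α) ∧ ∘α -/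
def bot (α : Form) : Form := (α.and α.neg).and α.circ
end Form

/-- Theorems of the extension of DmbC by the extra axiom schemas in `E`:
CPL⁺ axioms, (EM), (bc), (O-K), (O-E), the axioms in `E`,
with rules Modus Ponens and O-necessitation. -/
inductive ThmExt (E : Form → Prop) : Form → Prop
  | A1 (α β : Form) : ThmExt E (α.imp (β.imp α))
  | A2 (α β γ : Form) : ThmExt E ((α.imp (β.imp γ)).imp ((α.imp β).imp (α.imp γ)))
  | A3 (α β : Form) : ThmExt E (α.imp (β.imp (α.and β)))
  | A4 (α β : Form) : ThmExt E ((α.and β).imp α)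
  | A5 (α β : Form) : ThmExt E ((α.and β).imp β)
  | A6 (α β : Form) : ThmExt E (α.imp (α.or β))
  | A7 (α β : Form) : ThmExt E (β.imp (α.or β))
  | A8 (α β γ : Form) : ThmExt E ((α.imp γ).imp ((β.imp γ).imp ((α.or β).imp γ)))
  | A9 (α β : Form) : ThmExt E (((α.imp β).imp α).imp α)
  | EM (α : Form) : ThmExt E (α.or α.neg)
  | bc (α β : Form) : ThmExt E (α.circ.imp (α.imp (α.neg.imp β)))
  | OK (α β : Form) : ThmExt E ((α.imp β).obl.imp (α.obl.imp β.obl))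
  | OE (α : Form) : ThmExt E (α.bot.obl.imp α.bot)
  | extra {φ : Form} : E φ → ThmExt E φ
  | mp {α β : Form} : ThmExt E (α.imp β) → ThmExt E α → ThmExt E β
  | nec {α : Form} : ThmExt E α → ThmExt E α.obl

/-- Instances of axiom (ciw) ∘α ∨ (α ∧ ¬α). -/
def ciwAx (φ : Form) : Prop := ∃ α : Form, φ = α.circ.or (α.and α.neg)

/-- Instances of axiom (ci) ¬∘α → (α ∧ ¬α). -/
def ciAx (φ : Form) : Prop := ∃ α : Form, φ = α.circ.neg.imp (α.and α.neg)

/-- Instances of axiom (cf) ¬¬α → α. -/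
def cfAx (φ : Form) : Prop := ∃ α : Form, φ = α.neg.neg.imp α

/-- The four extensions of DmbC considered here. -/
inductive ExtLogic : Type
  | DmbCciw | DmbCci | DbC | DCi

/-- The extra axiom schemas of each logic. -/
def extAx : ExtLogic → Form → Prop
  | .DmbCciw => ciwAx
  | .DmbCci => ciAx
  | .DbC => cfAx
  | .DCi => fun φ => ciAx φ ∨ cfAx φ

/-- conj γ [γ₂,…,γ_k] = γ ∧ γ₂ ∧ … ∧ γ_k -/
def conj (γ : Form) : List Form → Form
  | [] => γ
  | δ :: l => γ.and (conj δ l)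

/-- Γ ⊢_L φ iff ⊢_L φ or ⊢_L (γ₁ ∧ … ∧ γ_k) → φ for some γ₁,…,γ_k ∈ Γ, k ≥ 1. -/
def DerivExt (L : ExtLogic) (Γ : Set Form) (φ : Form) : Prop :=
  ThmExt (extAx L) φ ∨ ∃ (γ : Form) (l : List Form),
    (∀ δ ∈ γ :: l, δ ∈ Γ) ∧ ThmExt (extAx L) ((conj γ l).imp φ)

/-- The three snapshots T = (1,0), t = (1,1), F = (0,1). -/
inductive SV : Type
  | T | t | F
deriving DecidableEq

/-- First coordinate of a snapshot. -/
def SV.p1 : SV → Bool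
  | .T => true | .t => true | .F => false

/-- Second coordinate of a snapshot. -/
def SV.p2 : SV → Bool
  | .T => false | .t => true | .F => true

/-- Designated values: D = {T, t}, i.e. first coordinate is 1. -/
def SV.desig (a : SV) : Prop := a.p1 = true

/-- Membership condition for the multioperation interpreting ¬ in each logic:
¬̃ for DmbCciw and DmbCci, ¬̃₁ for DbC and DCi.  Here `c` is the candidate value
of ¬α and `a` the value of α. -/
def negCond : ExtLogic → SV → SV → Prop
  | .DmbCciw, c, a => c.p1 = a.p2
  | .DmbCci, c, a => c.p1 = a.p2
  | .DbC, c, a => c.p1 = a.p2 ∧ c.p2 ≤ a.p1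
  | .DCi, c, a => c.p1 = a.p2 ∧ c.p2 ≤ a.p1

/-- Membership condition for the multioperation interpreting ∘ in each logic:
∘̃₁ for DmbCciw, ∘̃₂ for DmbCci and DCi, ∘̃ for DbC. -/
def circCond : ExtLogic → SV → SV → Prop
  | .DmbCciw, c, a => c.p1 = !(a.p1 && a.p2)
  | .DmbCci, c, a => c.p1 = !(a.p1 && a.p2) ∧ c.p2 = (a.p1 && a.p2)
  | .DbC, c, a => c.p1 ≤ !(a.p1 && a.p2)
  | .DCi, c, a => c.p1 = !(a.p1 && a.p2) ∧ c.p2 = (a.p1 && a.p2)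

/-- Swap Kripke model conditions for the logic L on a serial frame (W,R) with
valuations v_w : Form → SV. -/
structure IsModelExt (L : ExtLogic) {W : Type} (R : W → W → Prop)
    (v : W → Form → SV) : Prop where
  serial : ∀ w, ∃ w', R w w'
  and_ : ∀ w α β, (v w (α.and β)).p1 = ((v w α).p1 && (v w β).p1)
  or_ : ∀ w α β, (v w (α.or β)).p1 = ((v w α).p1 || (v w β).p1)
  imp_ : ∀ w α β, (v w (α.imp β)).p1 = (!(v w α).p1 || (v w β).p1)
  neg_ : ∀ w α, negCond L (v w α.neg) (v w α)
  circ_ : ∀ w α, circCond L (v w α.circ) (v w α)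
  obl_ : ∀ w α, ((v w α.obl).p1 = true ↔ ∀ w', R w w' → (v w' α).p1 = true)

/-- Γ ⊨_L φ : semantic consequence over all swap Kripke models for L. -/
def SemExt (L : ExtLogic) (Γ : Set Form) (φ : Form) : Prop :=
  ∀ (W : Type) (R : W → W → Prop) (v : W → Form → SV), Nonempty W →
    IsModelExt L R v → ∀ w : W, (∀ γ ∈ Γ, (v w γ).desig) → (v w φ).desig

lemma sv_cover (a : SV) : (a.p1 || a.p2) = true := by cases a <;> rfl

lemma neg_p1 {L : ExtLogic} {c a : SV} (h : negCond L c a) : c.p1 = a.p2 := by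
  cases L <;> first | exact h | exact h.1

lemma circ_le {L : ExtLogic} {c a : SV} (h : circCond L c a) :
    c.p1 = true → (a.p1 && a.p2) = false := by
  intro hc
  cases L <;> cases a <;> cases c <;> simp_all [circCond, SV.p1, SV.p2] <;> exact absurd h (by decide)

lemma thm_valid {L : ExtLogic} {W : Type} {R : W → W → Prop} {v : W → Form → SV}
    (h : IsModelExt L R v) {φ : Form} (ht : ThmExt (extAx L) φ) :
    ∀ w, (v w φ).p1 = true := by
  induction ht with
  | A1 α β => intro w; simp only [h.imp_]; cases (v w α).p1 <;> cases (v w β).p1 <;> simp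
  | A2 α β γ =>
      intro w; simp only [h.imp_]
      cases (v w α).p1 <;> cases (v w β).p1 <;> cases (v w γ).p1 <;> simp
  | A3 α β =>
      intro w; simp only [h.imp_, h.and_]
      cases (v w α).p1 <;> cases (v w β).p1 <;> simp
  | A4 α β =>
      intro w; simp only [h.imp_, h.and_]
      cases (v w α).p1 <;> cases (v w β).p1 <;> simp
  | A5 α β =>
      intro w; simp only [h.imp_, h.and_]
      cases (v w α).p1 <;> cases (v w β).p1 <;> simp
  | A6 α β =>
      intro w; simp only [h.imp_, h.or_]
      cases (v w α).p1 <;> cases (v w β).p1 <;> simp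
  | A7 α β =>
      intro w; simp only [h.imp_, h.or_]
      cases (v w α).p1 <;> cases (v w β).p1 <;> simp
  | A8 α β γ =>
      intro w; simp only [h.imp_, h.or_]
      cases (v w α).p1 <;> cases (v w β).p1 <;> cases (v w γ).p1 <;> simp
  | A9 α β =>
      intro w; simp only [h.imp_]
      cases (v w α).p1 <;> cases (v w β).p1 <;> simp
  | EM α =>
      intro w
      have hn := neg_p1 (h.neg_ w α)
      simp only [h.or_, hn]
      exact sv_cover _
  | bc α β =>
      intro w
      have hn := neg_p1 (h.neg_ w α)
      have hc := circ_le (h.circ_ w α)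
      simp only [h.imp_, hn]
      cases hcc : (v w α.circ).p1
      · simp
      · have h2 := hc hcc
        cases hab : (v w α).p1
        · simp [hab]
        · rw [hab] at h2; simp at h2; simp [h2]
  | OK α β =>
      intro w
      simp only [h.imp_]
      cases hx : (v w (α.imp β).obl).p1
      · simp
      · cases hy : (v w α.obl).p1
        · simp
        · have hz : (v w β.obl).p1 = true := by
            rw [h.obl_]
            intro w' hw
            have h1 := (h.obl_ w (α.imp β)).mp hx w' hw
            have h2 := (h.obl_ w α).mp hy w' hw
            have hi := h.imp_ w' α β
            rw [h1, h2] at hi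
            simpa using hi.symm
          simp [hz]
  | OE α =>
      intro w
      have hbot : ∀ w', (v w' α.bot).p1 = false := by
        intro w'
        have h1 := h.and_ w' (α.and α.neg) α.circ
        have h2 := h.and_ w' α α.neg
        have hn := neg_p1 (h.neg_ w' α)
        have hc := circ_le (h.circ_ w' α)
        show (v w' (((α.and α.neg)).and α.circ)).p1 = false
        rw [h1, h2, hn]
        by_cases hcc : (v w' α.circ).p1 = true
        · simp [hc hcc]
        · simp at hcc; simp [hcc]
      obtain ⟨w', hw'⟩ := h.serial w
      have hob : (v w α.bot.obl).p1 = false := by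
        by_contra hcon
        simp at hcon
        rw [h.obl_] at hcon
        have := hcon w' hw'
        simp [hbot w'] at this
      simp only [h.imp_, hob]
      simp
  | extra he =>
      intro w
      cases L with
      | DmbCciw =>
          obtain ⟨α, rfl⟩ := he
          have hc := h.circ_ w α
          have hn := neg_p1 (h.neg_ w α)
          simp only [circCond] at hc
          simp only [h.or_, h.and_, hc, hn]
          cases (v w α).p1 <;> cases (v w α).p2 <;> simp
      | DmbCci =>
          obtain ⟨α, rfl⟩ := he
          have hc := h.circ_ w α
          have hn := neg_p1 (h.neg_ w α)
          have hnc := neg_p1 (h.neg_ w α.circ)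
          simp only [circCond] at hc
          simp only [h.imp_, h.and_, hn, hnc, hc.2]
          cases (v w α).p1 <;> cases (v w α).p2 <;> simp
      | DbC =>
          obtain ⟨α, rfl⟩ := he
          have hn := h.neg_ w α
          have hnn := h.neg_ w α.neg
          simp only [negCond] at hn hnn
          simp only [h.imp_]
          cases hq : (v w α.neg.neg).p1
          · simp
          · rw [hnn.1] at hq
            have hle := hn.2
            rw [hq] at hle
            cases hp : (v w α).p1
            · rw [hp] at hle; exact absurd hle (by decide)
            · simp [hp]
      | DCi =>
          rcases he with ⟨α, rfl⟩ | ⟨α, rfl⟩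
          · have hc := h.circ_ w α
            have hn := h.neg_ w α
            have hnc := h.neg_ w α.circ
            simp only [circCond, negCond] at hc hn hnc
            simp only [h.imp_, h.and_, hn.1, hnc.1, hc.2]
            cases (v w α).p1 <;> cases (v w α).p2 <;> simp
          · have hn := h.neg_ w α
            have hnn := h.neg_ w α.neg
            simp only [negCond] at hn hnn
            simp only [h.imp_]
            cases hq : (v w α.neg.neg).p1
            · simp
            · rw [hnn.1] at hq
              have hle := hn.2
              rw [hq] at hle
              cases hp : (v w α).p1
              · rw [hp] at hle; exact absurd hle (by decide)
              · simp [hp]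
  | @mp α β h1 h2 ih1 ih2 =>
      intro w
      have := h.imp_ w α β
      rw [ih1 w, ih2 w] at this
      simpa using this.symm
  | nec h1 ih =>
      intro w
      rw [h.obl_]
      intro w' _
      exact ih w'

lemma conj_valid {L : ExtLogic} {W : Type} {R : W → W → Prop} {v : W → Form → SV}
    (h : IsModelExt L R v) (w : W) :
    ∀ (l : List Form) (γ : Form), (∀ δ ∈ γ :: l, (v w δ).p1 = true) →
      (v w (conj γ l)).p1 = true := by
  intro l
  induction l with
  | nil => intro γ hγ; exact hγ γ (by simp)
  | cons δ l ih =>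
      intro γ hγ
      show (v w (γ.and (conj δ l))).p1 = true
      rw [h.and_]
      have h1 := hγ γ (by simp)
      have h2 := ih δ (by intro ε hε; exact hγ ε (by simpa using Or.inr hε))
      simp [h1, h2]

/-- Soundness of DmbCciw, DmbCci, DbC, DCi w.r.t. swap Kripke models. -/
theorem ext_soundness (L : ExtLogic) (Γ : Set Form) (φ : Form) :
    DerivExt L Γ φ → SemExt L Γ φ := by
  intro hd W R v _ hm w hΓ
  cases hd with
  | inl ht => exact thm_valid hm ht w
  | inr hex =>
      obtain ⟨γ, l, hmem, ht⟩ := hex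
      have hc : (v w (conj γ l)).p1 = true :=
        conj_valid hm w l γ (fun δ hδ => hΓ δ (hmem δ hδ))
      have := hm.imp_ w (conj γ l) φ
      rw [thm_valid hm ht w, hc] at this
      simpa [SV.desig] using this.symm
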